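/- arXiv:2304.08097 — 2 statements merged into one kernel-verified Lean document; each statement's English description precedes it below -/
import Mathlib

section
/- Fix real numbers p₁, p₂, β and γ with |γ| < 1, and let ω = √(1−γ²). Define the 2×2 matrix R = ½(p₁² + p₂² + β²)·I + iβ(e₃₁^γ p₁ − e₂₃^γ p₂), where e₃₁^γ = i σ₂^γ and e₂₃^γ = i σ₁^γ with σ₁^γ = ω⁻¹·!![−iγ, 1; 1, iγ] and σ₂^γ = !![0, −i; i, 0]. Then the eigenvalues of R are ½(p₁²+p₂²+β²) ± β√(p₁²+p₂²), which are real. -/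
open Matrix Complex

noncomputable def omegaR (γ : ℝ) : ℝ := Real.sqrt (1 - γ^2)

noncomputable def sigma1γ (γ : ℝ) : Matrix (Fin 2) (Fin 2) ℂ :=
  ((omegaR γ : ℂ)⁻¹) • !![-I * γ, 1; 1, I * γ]

noncomputable def sigma2γ : Matrix (Fin 2) (Fin 2) ℂ := !![0, -I; I, 0]

/-- finite part of the non-Hermitian Rashba Hamiltonian -/
noncomputable def Rashba (γ p₁ p₂ β : ℝ) : Matrix (Fin 2) (Fin 2) ℂ :=
  (((p₁^2 + p₂^2 + β^2) / 2 : ℝ) : ℂ) • (1 : Matrix (Fin 2) (Fin 2) ℂ)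
    + (I * β) • ((p₁ : ℂ) • (I • sigma2γ) - (p₂ : ℂ) • (I • sigma1γ γ))

theorem stmt9 (γ p₁ p₂ β : ℝ) (hγ : |γ| < 1) :
    spectrum ℂ (Rashba γ p₁ p₂ β) =
      {(((p₁^2 + p₂^2 + β^2) / 2 + β * Real.sqrt (p₁^2 + p₂^2) : ℝ) : ℂ),
       (((p₁^2 + p₂^2 + β^2) / 2 - β * Real.sqrt (p₁^2 + p₂^2) : ℝ) : ℂ)} := by
  have h1 : (0:ℝ) < 1 - γ^2 := by nlinarith [abs_nonneg γ, _root_.sq_abs γ, hγ]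
  have hω2 : (omegaR γ)^2 = 1 - γ^2 := Real.sq_sqrt h1.le
  have hω0 : (omegaR γ : ℂ) ≠ 0 := by
    have : omegaR γ ≠ 0 := (Real.sqrt_pos.mpr h1).ne'
    exact_mod_cast this
  have hsq : (Real.sqrt (p₁^2 + p₂^2))^2 = p₁^2 + p₂^2 := Real.sq_sqrt (by positivity)
  ext x
  rw [spectrum.mem_iff]
  have hdet : (algebraMap ℂ (Matrix (Fin 2) (Fin 2) ℂ) x - Rashba γ p₁ p₂ β).det
      = (x - (((p₁^2 + p₂^2 + β^2) / 2 + β * Real.sqrt (p₁^2 + p₂^2) : ℝ) : ℂ))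
        * (x - (((p₁^2 + p₂^2 + β^2) / 2 - β * Real.sqrt (p₁^2 + p₂^2) : ℝ) : ℂ)) := by
    simp [Rashba, sigma1γ, sigma2γ, Matrix.det_fin_two, Matrix.algebraMap_eq_diagonal,
      Matrix.one_apply, Matrix.smul_apply, Matrix.add_apply, Matrix.sub_apply,
      Matrix.diagonal_apply]
    have hω2' : ((omegaR γ : ℂ))^2 = 1 - (γ:ℂ)^2 := by exact_mod_cast congrArg (Complex.ofReal) hω2
    have hsq' : ((Real.sqrt (p₁^2 + p₂^2) : ℂ))^2 = (p₁:ℂ)^2 + (p₂:ℂ)^2 := by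
      exact_mod_cast congrArg (Complex.ofReal) hsq
    field_simp
    ring_nf
    simp only [show Complex.I^4 = 1 by rw [show (4:ℕ)=2*2 from rfl, pow_mul, Complex.I_sq]; ring,
      show Complex.I^6 = -1 by rw [show (6:ℕ)=2*3 from rfl, pow_mul, Complex.I_sq]; ring,
      Complex.I_sq]
    linear_combination (4*(β:ℂ)^2*(p₂:ℂ)^2) * hω2' + (4*((omegaR γ:ℂ))^2*(β:ℂ)^2) * hsq'
  constructor
  · intro h
    have hd0 : (algebraMap ℂ (Matrix (Fin 2) (Fin 2) ℂ) x - Rashba γ p₁ p₂ β).det = 0 := by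
      by_contra hne
      exact h ((Matrix.isUnit_iff_isUnit_det _).mpr (isUnit_iff_ne_zero.mpr hne))
    rw [hdet, mul_eq_zero, sub_eq_zero, sub_eq_zero] at hd0
    simpa using hd0
  · intro h
    have hd0 : (algebraMap ℂ (Matrix (Fin 2) (Fin 2) ℂ) x - Rashba γ p₁ p₂ β).det = 0 := by
      rw [hdet]
      rcases h with h | h <;> simp_all
    intro hu
    exact (isUnit_iff_ne_zero.mp ((Matrix.isUnit_iff_isUnit_det _).mp hu)) hd0
end

section
/- Let 𝒯 = e₁₃ ∘ K where e₁₃ = σ₁σ₃ (a 2×2 matrix) and K is componentwise complex conjugation on ℂ². Let R_γ be the matrix ½(p₁² + p₂² + β²)·I + iβ(iσ₂^γ p₁ − iσ₁^γ p₂) (with p₁, p₂, β, γ real, |γ|<1, and the γ-deformed Pauli matrices as defined). Then 𝒯⁻¹ ∘ (v ↦ R_γ · v, with p replaced by −p) ∘ 𝒯 = (R_γ)† as linear maps, i.e., R_γ is 𝒯-pseudo-Hermitian: conjugating R_γ(p₁,p₂) by 𝒯 and reversing momentum yields R_γ(p₁,p₂)† = R_{−γ}(p₁,p₂). -/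
open Matrix Complex

/-- e₁₃ = σ₁σ₃ -/
noncomputable def e13 : Matrix (Fin 2) (Fin 2) ℂ := !![0, -1; 1, 0]

lemma e13_inv : e13⁻¹ = !![0, 1; -1, 0] := by
  rw [Matrix.inv_def]
  simp [e13, Matrix.adjugate_fin_two, Matrix.det_fin_two]

lemma omegaR_neg (γ : ℝ) : omegaR (-γ) = omegaR γ := by
  simp [omegaR]

lemma Rashba_eq (γ p₁ p₂ β : ℝ) :
    Rashba γ p₁ p₂ β =
      !![(((p₁^2 + p₂^2 + β^2) / 2 : ℝ) : ℂ) - I * β * γ * p₂ * ((omegaR γ : ℂ)⁻¹),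
         (β : ℂ) * p₂ * ((omegaR γ : ℂ)⁻¹) + I * β * p₁;
         (β : ℂ) * p₂ * ((omegaR γ : ℂ)⁻¹) - I * β * p₁,
         (((p₁^2 + p₂^2 + β^2) / 2 : ℝ) : ℂ) + I * β * γ * p₂ * ((omegaR γ : ℂ)⁻¹)] := by
  ext i j
  fin_cases i <;> fin_cases j <;>
    · simp [Rashba, sigma1γ, sigma2γ, Matrix.one_apply]
      ring_nf
      try simp only [show (I:ℂ)^3 = -I from by rw [pow_succ, Complex.I_sq]; ring, Complex.I_sq]
      try ring

theorem stmt11 (γ p₁ p₂ β : ℝ) (hγ : |γ| < 1) :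
    e13 * ((Rashba γ (-p₁) (-p₂) β).map (starRingEnd ℂ)) * e13⁻¹
      = (Rashba γ p₁ p₂ β)ᴴ ∧
    (Rashba γ p₁ p₂ β)ᴴ = Rashba (-γ) p₁ p₂ β := by
  constructor
  · rw [e13_inv, Rashba_eq γ (-p₁) (-p₂) β, Rashba_eq γ p₁ p₂ β]
    ext i j
    fin_cases i <;> fin_cases j <;>
      simp [e13, Matrix.mul_apply, Matrix.vecMul, dotProduct, Fin.sum_univ_two,
        Matrix.conjTranspose_apply,
        Matrix.map_apply, map_add, map_sub, _root_.map_mul, map_ofNat, Complex.conj_I, Complex.conj_ofReal] <;> ring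
  · rw [Rashba_eq γ p₁ p₂ β, Rashba_eq (-γ) p₁ p₂ β, omegaR_neg]
    ext i j
    fin_cases i <;> fin_cases j <;>
      simp [Matrix.conjTranspose_apply, map_add, map_sub, _root_.map_mul, Complex.conj_I,
        Complex.conj_ofReal] <;> ring
end
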